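/- Let $X$ be a complete metric space and $0<\lambda<1$. Suppose $\mathcal{F}$ is a non-empty family of non-empty closed subsets of $X$ such that for every $F\in\mathcal{F}$, every $x\in X$ and $r>0$ with $B(x;r)\cap F\neq\varnothing$, there exists $J\in\mathcal{F}$ with $\varnothing\neq J\cap B(x;r)\subseteq F\cap B(x;r)$ and such that $F\cap B(x;r)$ is not $\lambda$-porous at any point of $J\cap B(x;r)$. Then no set in $\mathcal{F}$ is $\sigma$-$\lambda$-porous. -/
import Mathlib


open MeasureTheory Metric Set ENNReal

/-- `E` is `lam`-porous at `x`: for every `δ > 0` there is `y ∈ B(x;δ) \ {x}` with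
`B(y; lam * d(x,y)) ∩ E = ∅`. -/
def PorousAt {X : Type*} [PseudoMetricSpace X] (lam : ℝ) (E : Set X) (x : X) : Prop :=
  ∀ δ > 0, ∃ y ∈ Metric.ball x δ, y ≠ x ∧ Metric.ball y (lam * dist x y) ∩ E = ∅

/-- `E` is `lam`-porous if it is `lam`-porous at each of its points. -/
def Porous {X : Type*} [PseudoMetricSpace X] (lam : ℝ) (E : Set X) : Prop :=
  ∀ x ∈ E, PorousAt lam E x

/-- `E` is `σ`-`lam`-porous if it is a countable union of `lam`-porous sets. -/
def SigmaPorousFor {X : Type*} [PseudoMetricSpace X] (lam : ℝ) (E : Set X) : Prop :=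
  ∃ S : ℕ → Set X, (∀ n, Porous lam (S n)) ∧ E = ⋃ n, S n

/-- `E` is `σ`-porous if it is a countable union of sets, each `lam`-porous for
some `0 < lam < 1`. -/
def SigmaPorous {X : Type*} [PseudoMetricSpace X] (E : Set X) : Prop :=
  ∃ S : ℕ → Set X, (∀ n, ∃ lam : ℝ, 0 < lam ∧ lam < 1 ∧ Porous lam (S n)) ∧ E = ⋃ n, S n

/-- Zajíček-type lemma: if every portion of each `F ∈ 𝓕` contains a portion of some `J ∈ 𝓕`
at whose points `F ∩ B(x;r)` is non-`lam`-porous, then no member of `𝓕` is `σ`-`lam`-porous. -/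
theorem stmt_0 {X : Type*} [MetricSpace X] [CompleteSpace X] (lam : ℝ)
    (hlam0 : 0 < lam) (hlam1 : lam < 1)
    (𝓕 : Set (Set X)) (h𝓕 : 𝓕.Nonempty)
    (hne : ∀ F ∈ 𝓕, F.Nonempty) (hcl : ∀ F ∈ 𝓕, IsClosed F)
    (hkey : ∀ F ∈ 𝓕, ∀ x : X, ∀ r > (0 : ℝ), (Metric.ball x r ∩ F).Nonempty →
      ∃ J ∈ 𝓕, (J ∩ Metric.ball x r).Nonempty ∧
        J ∩ Metric.ball x r ⊆ F ∩ Metric.ball x r ∧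
        ∀ z ∈ J ∩ Metric.ball x r, ¬ PorousAt lam (F ∩ Metric.ball x r) z) :
    ∀ F ∈ 𝓕, ¬ SigmaPorousFor lam F := by
  intro F₀ hF₀ hσ
  obtain ⟨S, hSpor, hcup⟩ := hσ
  obtain ⟨x₀, hx₀⟩ := hne F₀ hF₀
  -- The one-step construction.
  have hstep : ∀ (n : ℕ) (F : Set X) (x : X) (r : ℝ), F ∈ 𝓕 → 0 < r →
      (Metric.ball x r ∩ F).Nonempty →
      ∃ (F' : Set X) (x' : X) (r' : ℝ), F' ∈ 𝓕 ∧ 0 < r' ∧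
        (Metric.ball x' r' ∩ F').Nonempty ∧ r' ≤ r / 2 ∧
        Metric.closedBall x' r' ⊆ Metric.ball x r ∧
        F' ∩ Metric.ball x' r' ⊆ F ∩ Metric.ball x r ∧
        S n ∩ (F' ∩ Metric.closedBall x' r') = ∅ := by
    intro n F x r hF hr hint
    obtain ⟨J, hJ𝓕, hJne, hJsub, hJnp⟩ := hkey F hF x r hr hint
    by_cases hcase : (J ∩ Metric.ball x r ∩ S n).Nonempty
    · -- there is a point of `S n` in the portion; use matched porosity/non-porosity
      obtain ⟨z, ⟨hzJ, hzB⟩, hzS⟩ := hcase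
      have hnp := hJnp z ⟨hzJ, hzB⟩
      rw [PorousAt] at hnp
      push_neg at hnp
      obtain ⟨δ, hδ, hδ'⟩ := hnp
      obtain ⟨y, hyB, hyz, hyhole⟩ := hSpor n z hzS δ hδ
      obtain ⟨w, hwB, hwF, hwxB⟩ := hδ' y hyB hyz
      have hwy : dist w y < lam * dist z y := Metric.mem_ball.1 hwB
      have hwx : dist w x < r := Metric.mem_ball.1 hwxB
      set ρ := min (min (r / 2) ((r - dist w x) / 2)) ((lam * dist z y - dist w y) / 2)
        with hρdef
      have hρ : 0 < ρ := lt_min (lt_min (by linarith) (by linarith)) (by linarith)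
      have hρ1 : ρ ≤ r / 2 := (min_le_left _ _).trans (min_le_left _ _)
      have hρ2 : ρ ≤ (r - dist w x) / 2 := (min_le_left _ _).trans (min_le_right _ _)
      have hρ3 : ρ ≤ (lam * dist z y - dist w y) / 2 := min_le_right _ _
      have hcb : Metric.closedBall w ρ ⊆ Metric.ball x r := by
        intro q hq
        have h1 : dist q w ≤ ρ := Metric.mem_closedBall.1 hq
        have h3 := dist_triangle q w x
        exact Metric.mem_ball.2 (by linarith)
      refine ⟨F, w, ρ, hF, hρ, ⟨w, Metric.mem_ball_self hρ, hwF⟩, hρ1, hcb, ?_, ?_⟩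
      · exact fun q hq => ⟨hq.1, hcb (Metric.ball_subset_closedBall hq.2)⟩
      · apply Set.eq_empty_iff_forall_notMem.2
        rintro q ⟨hqS, _hqF, hqB⟩
        have h1 : dist q w ≤ ρ := Metric.mem_closedBall.1 hqB
        have h3 := dist_triangle q w y
        have hq' : q ∈ Metric.ball y (lam * dist z y) ∩ S n :=
          ⟨Metric.mem_ball.2 (by linarith), hqS⟩
        rw [hyhole] at hq'
        exact hq'
    · -- the portion misses `S n` entirely
      have hemp : J ∩ Metric.ball x r ∩ S n = ∅ := Set.not_nonempty_iff_eq_empty.1 hcase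
      obtain ⟨z, hzJ, hzB⟩ := hJne
      have hzx : dist z x < r := Metric.mem_ball.1 hzB
      set ρ := min (r / 2) ((r - dist z x) / 2) with hρdef
      have hρ : 0 < ρ := lt_min (by linarith) (by linarith)
      have hρ2 : ρ ≤ (r - dist z x) / 2 := min_le_right _ _
      have hcb : Metric.closedBall z ρ ⊆ Metric.ball x r := by
        intro q hq
        have h1 : dist q z ≤ ρ := Metric.mem_closedBall.1 hq
        have h3 := dist_triangle q z x
        exact Metric.mem_ball.2 (by linarith)
      refine ⟨J, z, ρ, hJ𝓕, hρ, ⟨z, Metric.mem_ball_self hρ, hzJ⟩, min_le_left _ _, hcb,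
        ?_, ?_⟩
      · exact fun q hq => hJsub ⟨hq.1, hcb (Metric.ball_subset_closedBall hq.2)⟩
      · apply Set.eq_empty_iff_forall_notMem.2
        rintro q ⟨hqS, hqJ, hqB⟩
        have : q ∈ J ∩ Metric.ball x r ∩ S n := ⟨⟨hqJ, hcb hqB⟩, hqS⟩
        rw [hemp] at this
        exact this
  choose! Q1 Q2 Q3 hQ𝓕 hQr hQne hQhalf hQcb hQsub hQdisj using hstep
  -- construct the sequence of states
  obtain ⟨seq, hseq0, hseqS⟩ :
      ∃ seq : ℕ → Set X × X × ℝ, seq 0 = (F₀, x₀, 1) ∧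
        ∀ n, seq (n + 1) =
          (Q1 n (seq n).1 (seq n).2.1 (seq n).2.2,
           Q2 n (seq n).1 (seq n).2.1 (seq n).2.2,
           Q3 n (seq n).1 (seq n).2.1 (seq n).2.2) :=
    ⟨fun n => Nat.rec (F₀, x₀, 1)
      (fun k ih => (Q1 k ih.1 ih.2.1 ih.2.2, Q2 k ih.1 ih.2.1 ih.2.2,
        Q3 k ih.1 ih.2.1 ih.2.2)) n, rfl, fun _ => rfl⟩
  have hGood : ∀ n, (seq n).1 ∈ 𝓕 ∧ 0 < (seq n).2.2 ∧
      (Metric.ball (seq n).2.1 (seq n).2.2 ∩ (seq n).1).Nonempty := by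
    intro n
    induction n with
    | zero =>
      rw [hseq0]
      exact ⟨hF₀, one_pos, ⟨x₀, Metric.mem_ball_self one_pos, hx₀⟩⟩
    | succ n ih =>
      rw [hseqS n]
      exact ⟨hQ𝓕 n _ _ _ ih.1 ih.2.1 ih.2.2, hQr n _ _ _ ih.1 ih.2.1 ih.2.2,
        hQne n _ _ _ ih.1 ih.2.1 ih.2.2⟩
  have hNext : ∀ n, (seq (n + 1)).2.2 ≤ (seq n).2.2 / 2 ∧
      Metric.closedBall (seq (n + 1)).2.1 (seq (n + 1)).2.2 ⊆
        Metric.ball (seq n).2.1 (seq n).2.2 ∧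
      (seq (n + 1)).1 ∩ Metric.ball (seq (n + 1)).2.1 (seq (n + 1)).2.2 ⊆
        (seq n).1 ∩ Metric.ball (seq n).2.1 (seq n).2.2 ∧
      S n ∩ ((seq (n + 1)).1 ∩ Metric.closedBall (seq (n + 1)).2.1 (seq (n + 1)).2.2) = ∅ := by
    intro n
    have h := hGood n
    rw [hseqS n]
    exact ⟨hQhalf n _ _ _ h.1 h.2.1 h.2.2, hQcb n _ _ _ h.1 h.2.1 h.2.2,
      hQsub n _ _ _ h.1 h.2.1 h.2.2, hQdisj n _ _ _ h.1 h.2.1 h.2.2⟩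
  -- radius bound
  have hrb : ∀ n, (seq n).2.2 ≤ (1 / 2 : ℝ) ^ n := by
    intro n
    induction n with
    | zero => rw [hseq0]; norm_num
    | succ n ih =>
      have h1 := (hNext n).1
      have : ((1 : ℝ) / 2) ^ (n + 1) = (1 / 2) ^ n / 2 := by ring
      rw [this]
      linarith
  -- chain of inclusions
  have hchain : ∀ n k, n ≤ k →
      (seq k).1 ∩ Metric.ball (seq k).2.1 (seq k).2.2 ⊆
        (seq n).1 ∩ Metric.ball (seq n).2.1 (seq n).2.2 := by
    intro n k hk
    induction k, hk using Nat.le_induction with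
    | base => exact subset_rfl
    | succ k hk ih => exact subset_trans (hNext k).2.2.1 ih
  -- pick points
  have hpick : ∀ n, ∃ q, q ∈ Metric.ball (seq n).2.1 (seq n).2.2 ∩ (seq n).1 :=
    fun n => (hGood n).2.2
  choose p hp using hpick
  have hpin : ∀ n k, n ≤ k →
      p k ∈ (seq n).1 ∩ Metric.ball (seq n).2.1 (seq n).2.2 :=
    fun n k hk => hchain n k hk ⟨(hp k).2, (hp k).1⟩
  -- Cauchy
  have hcauchy : CauchySeq p := by
    rw [Metric.cauchySeq_iff']
    intro ε hε
    obtain ⟨N, hN⟩ := exists_pow_lt_of_lt_one (show (0 : ℝ) < ε / 2 by linarith)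
      (show (1 : ℝ) / 2 < 1 by norm_num)
    refine ⟨N, fun k hk => ?_⟩
    have h1 : dist (p k) (seq N).2.1 < (seq N).2.2 := Metric.mem_ball.1 (hpin N k hk).2
    have h2 : dist (p N) (seq N).2.1 < (seq N).2.2 := Metric.mem_ball.1 (hpin N N le_rfl).2
    have h3 := dist_triangle (p k) (seq N).2.1 (p N)
    have h4 : dist (seq N).2.1 (p N) = dist (p N) (seq N).2.1 := dist_comm _ _
    have h5 := hrb N
    calc dist (p k) (p N) ≤ dist (p k) (seq N).2.1 + dist (seq N).2.1 (p N) := h3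
      _ < ε := by rw [h4]; linarith
  obtain ⟨x, hx⟩ := cauchySeq_tendsto_of_complete hcauchy
  have hxF : ∀ n, x ∈ (seq n).1 := by
    intro n
    refine (hcl _ (hGood n).1).mem_of_tendsto hx ?_
    exact Filter.eventually_atTop.2 ⟨n, fun k hk => (hpin n k hk).1⟩
  have hxB : ∀ n, x ∈ Metric.closedBall (seq (n + 1)).2.1 (seq (n + 1)).2.2 := by
    intro n
    refine Metric.isClosed_closedBall.mem_of_tendsto hx ?_
    exact Filter.eventually_atTop.2
      ⟨n + 1, fun k hk => Metric.ball_subset_closedBall (hpin (n + 1) k hk).2⟩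
  have hxF₀ : x ∈ F₀ := by
    have := hxF 0
    rwa [hseq0] at this
  rw [hcup] at hxF₀
  obtain ⟨m, hm⟩ := Set.mem_iUnion.1 hxF₀
  have hmem : x ∈ S m ∩ ((seq (m + 1)).1 ∩
      Metric.closedBall (seq (m + 1)).2.1 (seq (m + 1)).2.2) :=
    ⟨hm, hxF (m + 1), hxB m⟩
  rw [(hNext m).2.2.2] at hmem
  exact hmem
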